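/- Let p ≥ 5 and λ = 1/p, and consider the cubes of the construction above: for levels 0 ≤ k' < k, any cube γA_w (γ ∈ ℤⁿ, w ∈ W_k) either is at Euclidean distance at least λ^{k+1} from every cube γ'A_{w'} (γ' ∈ ℤⁿ, w' ∈ W_{k'}), or is contained in some cube γ'A_{w'} with its boundary at distance at least λ^{k+1} from the boundary of γ'A_{w'} (separation property). -/

import Mathlib

/-- The homothety `h_l` of ratio `1/p` mapping `[0,1]ⁿ` onto its `l`-th subcube
(letters `l ∈ L = {0,…,p-1}ⁿ`, 0-indexed), on Euclidean space. -/
noncomputable def subcubeHomothety (n p : ℕ) (l : Fin n → Fin p)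
    (x : EuclideanSpace ℝ (Fin n)) : EuclideanSpace ℝ (Fin n) :=
  WithLp.toLp 2 (fun i => (x i + (l i : ℝ)) / p)

/-- `h_w` for a word `w = l₁…l_k`: the composition `h_{l₁} ∘ … ∘ h_{l_k}`. -/
noncomputable def wordHomothety (n p : ℕ) (w : List (Fin n → Fin p)) :
    EuclideanSpace ℝ (Fin n) → EuclideanSpace ℝ (Fin n) :=
  w.foldr (fun l f => subcubeHomothety n p l ∘ f) id

/-- The cube `γ + A_w` for `γ ∈ ℤⁿ` and a word `w`. -/
noncomputable def cubeOf (n p : ℕ) (γ : Fin n → ℤ) (w : List (Fin n → Fin p))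
    (A : Set (EuclideanSpace ℝ (Fin n))) : Set (EuclideanSpace ℝ (Fin n)) :=
  (fun a => (WithLp.toLp 2 (fun i => (γ i : ℝ) + a i) : EuclideanSpace ℝ (Fin n))) ''
    (wordHomothety n p w '' A)

/-! ### Auxiliary machinery -/

/-- The integer "digit value" of a word: `Nval w i = ∑ w_j(i) p^{k-1-j}`. -/
def Nval (n p : ℕ) : List (Fin n → Fin p) → Fin n → ℤ
  | [] => fun _ => 0
  | l :: w => fun i => (l i : ℤ) * p ^ w.length + Nval n p w i

lemma coord_dist_le {n : ℕ} (x y : EuclideanSpace ℝ (Fin n)) (i : Fin n) :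
    |x i - y i| ≤ dist x y := by
  rw [EuclideanSpace.dist_eq]
  rw [← Real.sqrt_sq (abs_nonneg (x i - y i))]
  apply Real.sqrt_le_sqrt
  rw [sq_abs]
  have := Finset.single_le_sum (f := fun j => dist (x j) (y j) ^ 2)
    (fun j _ => sq_nonneg _) (Finset.mem_univ i)
  simpa [Real.dist_eq] using this

lemma key_dist {n : ℕ} (x y : EuclideanSpace ℝ (Fin n)) (i : Fin n) (t : ℝ) (ht : 0 < t)
    {a b : ℤ} (hab : a + 1 ≤ b) (hx : x i ≤ (a : ℝ) * t) (hy : (b : ℝ) * t ≤ y i) :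
    t ≤ dist x y := by
  have h1 : ((a : ℝ) + 1) ≤ (b : ℝ) := by exact_mod_cast hab
  have h2 : t ≤ |x i - y i| := by
    rw [abs_sub_comm, abs_of_nonneg (by nlinarith)]
    nlinarith
  exact h2.trans (coord_dist_le x y i)

lemma wordHomothety_apply (n p : ℕ) (hp : 0 < p) (w : List (Fin n → Fin p))
    (x : EuclideanSpace ℝ (Fin n)) (i : Fin n) :
    wordHomothety n p w x i = (x i + (Nval n p w i : ℝ)) / (p:ℝ) ^ w.length := by
  have hp' : (p:ℝ) ≠ 0 := by positivity
  induction w generalizing x with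
  | nil => simp [wordHomothety, Nval]
  | cons l w ih =>
    have : wordHomothety n p (l :: w) x = subcubeHomothety n p l (wordHomothety n p w x) := rfl
    rw [this]
    show (wordHomothety n p w x i + (l i : ℝ)) / p = _
    rw [ih]
    simp only [Nval, List.length_cons]
    push_cast
    field_simp
    ring

lemma mem_cubeOf (n p : ℕ) (hp : 0 < p) (A : Set (EuclideanSpace ℝ (Fin n)))
    (hA : A = {x | ∀ i, x i ∈ Set.Icc (1 / (p : ℝ)) (1 - 1 / p)})
    (γ : Fin n → ℤ) (w : List (Fin n → Fin p)) (x : EuclideanSpace ℝ (Fin n)) :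
    x ∈ cubeOf n p γ w A ↔ ∀ i,
      ((p * (γ i * (p:ℤ) ^ w.length + Nval n p w i) + 1 : ℤ) : ℝ) * (1/(p:ℝ)) ^ (w.length + 1) ≤ x i ∧
      x i ≤ ((p * (γ i * (p:ℤ) ^ w.length + Nval n p w i) + p - 1 : ℤ) : ℝ) * (1/(p:ℝ)) ^ (w.length + 1) := by
  have hp' : (0:ℝ) < p := by exact_mod_cast hp
  have hpne : (p:ℝ) ≠ 0 := ne_of_gt hp'
  have hpk : (0:ℝ) < (p:ℝ) ^ w.length := by positivity
  have e1 : ∀ i : Fin n, ((p * (γ i * (p:ℤ) ^ w.length + Nval n p w i) + 1 : ℤ) : ℝ) * (1/(p:ℝ)) ^ (w.length + 1)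
      = (γ i : ℝ) + (1/(p:ℝ) + Nval n p w i) / (p:ℝ) ^ w.length := by
    intro i; push_cast; rw [div_pow, one_pow]; field_simp; ring
  have e2 : ∀ i : Fin n, ((p * (γ i * (p:ℤ) ^ w.length + Nval n p w i) + p - 1 : ℤ) : ℝ) * (1/(p:ℝ)) ^ (w.length + 1)
      = (γ i : ℝ) + (1 - 1/(p:ℝ) + Nval n p w i) / (p:ℝ) ^ w.length := by
    intro i; push_cast; rw [div_pow, one_pow]; field_simp; ring
  constructor
  · rintro ⟨b, ⟨a, ha, rfl⟩, rfl⟩ i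
    rw [hA] at ha
    obtain ⟨h1, h2⟩ := ha i
    show _ ≤ (γ i : ℝ) + wordHomothety n p w a i ∧ (γ i : ℝ) + wordHomothety n p w a i ≤ _
    rw [wordHomothety_apply n p hp, e1, e2]
    constructor
    · have : (1/(p:ℝ) + Nval n p w i) / (p:ℝ) ^ w.length ≤ (a i + Nval n p w i) / (p:ℝ) ^ w.length := by
        gcongr
      linarith
    · have : (a i + (Nval n p w i : ℝ)) / (p:ℝ) ^ w.length ≤ (1 - 1/(p:ℝ) + Nval n p w i) / (p:ℝ) ^ w.length := by
        gcongr
      linarith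
  · intro h
    refine ⟨WithLp.toLp 2 (fun i => (x i - γ i : ℝ)), ⟨WithLp.toLp 2 (fun i => (x i - (γ i:ℝ)) * (p:ℝ)^w.length - Nval n p w i), ?_, ?_⟩, ?_⟩
    · rw [hA]
      intro i
      obtain ⟨h1, h2⟩ := h i
      rw [e1] at h1
      rw [e2] at h2
      constructor
      · have := (div_le_iff₀ hpk).mp (show (1/(p:ℝ) + Nval n p w i) / (p:ℝ) ^ w.length ≤ x i - γ i by linarith)
        simp only [Set.mem_setOf_eq]
        linarith
      · have := (le_div_iff₀ hpk).mp (show (x i - (γ i:ℝ)) ≤ (1 - 1/(p:ℝ) + Nval n p w i) / (p:ℝ) ^ w.length by linarith)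
        linarith
    · ext i
      rw [wordHomothety_apply n p hp]
      show ((x i - (γ i:ℝ)) * (p:ℝ)^w.length - Nval n p w i + Nval n p w i) / (p:ℝ)^w.length = _
      field_simp
      ring
    · ext i
      show (γ i : ℝ) + (x i - γ i) = x i
      ring

lemma mem_cubeOf' (n p : ℕ) (hp : 0 < p) (A : Set (EuclideanSpace ℝ (Fin n)))
    (hA : A = {x | ∀ i, x i ∈ Set.Icc (1 / (p : ℝ)) (1 - 1 / p)})
    (γ : Fin n → ℤ) (w : List (Fin n → Fin p)) (k : ℕ) (hw : w.length = k)
    (m : Fin n → ℤ) (hm : ∀ i, m i = γ i * (p:ℤ) ^ k + Nval n p w i)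
    (x : EuclideanSpace ℝ (Fin n)) :
    x ∈ cubeOf n p γ w A ↔ ∀ i,
      ((p * m i + 1 : ℤ) : ℝ) * (1/(p:ℝ)) ^ (k + 1) ≤ x i ∧
      x i ≤ ((p * m i + p - 1 : ℤ) : ℝ) * (1/(p:ℝ)) ^ (k + 1) := by
  subst hw
  simp only [hm]
  exact mem_cubeOf n p hp A hA γ w x

lemma exists_word (n p : ℕ) (hp : 0 < p) (k' : ℕ) (m' : Fin n → ℤ) :
    ∃ (γ' : Fin n → ℤ) (w' : List (Fin n → Fin p)), w'.length = k' ∧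
      ∀ i, γ' i * (p:ℤ) ^ k' + Nval n p w' i = m' i := by
  induction k' generalizing m' with
  | zero => exact ⟨m', [], rfl, fun i => by simp [Nval]⟩
  | succ k' ih =>
    obtain ⟨γ₁, w'', hlen, hval⟩ := ih m'
    have hpz : (p:ℤ) ≠ 0 := by exact_mod_cast hp.ne'
    have hppos : (0:ℤ) < p := by exact_mod_cast hp
    refine ⟨fun i => γ₁ i / p,
      (fun i => ⟨(γ₁ i % p).toNat, ?_⟩) :: w'', by simp [hlen], ?_⟩
    · rw [Int.toNat_lt (Int.emod_nonneg _ hpz)]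
      exact Int.emod_lt_of_pos _ hppos
    · intro i
      have hNv : Nval n p ((fun i => (⟨(γ₁ i % p).toNat, by
          rw [Int.toNat_lt (Int.emod_nonneg _ hpz)]; exact Int.emod_lt_of_pos _ hppos⟩ : Fin p))
          :: w'') i = (γ₁ i % p) * (p:ℤ) ^ w''.length + Nval n p w'' i := by
        show ((((γ₁ i % p).toNat : ℕ) : ℤ)) * (p:ℕ) ^ w''.length + _ = _
        rw [Int.toNat_of_nonneg (Int.emod_nonneg _ hpz)]
      rw [hlen] at hNv
      rw [hNv]
      have hde := Int.mul_ediv_add_emod (γ₁ i) p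
      have hv := hval i
      show γ₁ i / (p:ℤ) * (p:ℤ) ^ (k' + 1) + _ = _
      linear_combination hv + (p:ℤ)^k' * hde

lemma frontier_mem (n : ℕ) (lo hi : Fin n → ℝ) {y : EuclideanSpace ℝ (Fin n)}
    (hy : y ∈ frontier {x : EuclideanSpace ℝ (Fin n) | ∀ i, lo i ≤ x i ∧ x i ≤ hi i}) :
    ∃ i, y i ≤ lo i ∨ hi i ≤ y i := by
  by_contra hcon
  push_neg at hcon
  have hU : IsOpen {x : EuclideanSpace ℝ (Fin n) | ∀ i, lo i < x i ∧ x i < hi i} := by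
    have he : {x : EuclideanSpace ℝ (Fin n) | ∀ i, lo i < x i ∧ x i < hi i}
        = ⋂ i, (fun x : EuclideanSpace ℝ (Fin n) => x i) ⁻¹' (Set.Ioo (lo i) (hi i)) := by
      ext x; simp [Set.mem_Ioo]
    rw [he]
    exact isOpen_iInter_of_finite fun i => isOpen_Ioo.preimage (by fun_prop)
  have hsub : {x : EuclideanSpace ℝ (Fin n) | ∀ i, lo i < x i ∧ x i < hi i} ⊆
      {x : EuclideanSpace ℝ (Fin n) | ∀ i, lo i ≤ x i ∧ x i ≤ hi i} :=
    fun x hx i => ⟨(hx i).1.le, (hx i).2.le⟩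
  have hyU : y ∈ {x : EuclideanSpace ℝ (Fin n) | ∀ i, lo i < x i ∧ x i < hi i} :=
    fun i => hcon i
  have : y ∈ interior {x : EuclideanSpace ℝ (Fin n) | ∀ i, lo i ≤ x i ∧ x i ≤ hi i} :=
    interior_maximal hsub hU hyU
  exact hy.2 this

set_option maxHeartbeats 1600000 in
/-- Separation property: for levels `0 ≤ k' < k`, any cube `γ + A_w` of level `k` is
either at Euclidean distance at least `λ^{k+1}` (`λ = 1/p`) from every cube
`γ' + A_{w'}` of level `k'`, or it is contained in some such cube with every point of
it at distance at least `λ^{k+1}` from the boundary of that cube. -/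
theorem separation_property (n p : ℕ) (hp : 5 ≤ p)
    (A : Set (EuclideanSpace ℝ (Fin n)))
    (hA : A = {x | ∀ i, x i ∈ Set.Icc (1 / (p : ℝ)) (1 - 1 / p)})
    (k k' : ℕ) (hk : k' < k)
    (γ : Fin n → ℤ) (w : List (Fin n → Fin p)) (hw : w.length = k) :
    (∀ (γ' : Fin n → ℤ) (w' : List (Fin n → Fin p)), w'.length = k' →
        ∀ x ∈ cubeOf n p γ w A, ∀ y ∈ cubeOf n p γ' w' A,
          (1 / (p : ℝ)) ^ (k + 1) ≤ dist x y) ∨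
      (∃ (γ' : Fin n → ℤ) (w' : List (Fin n → Fin p)), w'.length = k' ∧
        cubeOf n p γ w A ⊆ cubeOf n p γ' w' A ∧
        ∀ x ∈ cubeOf n p γ w A, ∀ y ∈ frontier (cubeOf n p γ' w' A),
          (1 / (p : ℝ)) ^ (k + 1) ≤ dist x y) := by
  have hp0 : 0 < p := by omega
  have hp' : (0:ℝ) < p := by exact_mod_cast hp0
  have hPpos : (0:ℤ) < (p:ℤ) := by exact_mod_cast hp0
  set d : ℕ := k - k' with hd
  have hkd : k' + 1 + d = k + 1 := by omega
  set Q : ℤ := (p:ℤ) ^ (d - 1) with hQdef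
  set q : ℤ := (p:ℤ) ^ d with hqdef
  have hq : q = Q * p := by
    rw [hqdef, hQdef, ← pow_succ]
    congr 1
    omega
  have hQpos : (0:ℤ) < Q := pow_pos hPpos _
  have hqpos : (0:ℤ) < q := pow_pos hPpos _
  set t : ℝ := (1/(p:ℝ)) ^ (k + 1) with htdef
  have ht : 0 < t := by positivity
  set m : Fin n → ℤ := fun i => γ i * (p:ℤ) ^ k + Nval n p w i with hmdef
  set m' : Fin n → ℤ := fun i => m i / q with hm'def
  set r : Fin n → ℤ := fun i => m i % q with hrdef
  have hm : ∀ i, m i = q * m' i + r i := fun i => (Int.mul_ediv_add_emod (m i) q).symm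
  have hr0 : ∀ i, 0 ≤ r i := fun i => Int.emod_nonneg _ hqpos.ne'
  have hrq : ∀ i, r i + 1 ≤ q := fun i => Int.emod_lt_of_pos _ hqpos
  have hxmem := mem_cubeOf' n p hp0 A hA γ w k hw m (fun i => rfl)
  -- conversion of level-k' endpoints into units of t
  have hconv : ∀ c : ℤ, ((c : ℤ) : ℝ) * (1/(p:ℝ)) ^ (k' + 1) = ((c * q : ℤ) : ℝ) * t := by
    intro c
    have hpd : (p:ℝ) ^ d * (1/(p:ℝ)) ^ d = 1 := by
      rw [one_div, inv_pow, mul_inv_cancel₀ (by positivity)]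
    have hsplit : (1/(p:ℝ)) ^ (k + 1) = (1/(p:ℝ)) ^ (k' + 1) * (1/(p:ℝ)) ^ d := by
      rw [← pow_add, hkd]
    push_cast
    rw [htdef, hsplit, hqdef]
    push_cast
    linear_combination (-(c:ℝ) * (1/(p:ℝ)) ^ (k' + 1)) * hpd
  by_cases hgood : ∀ i, Q ≤ r i ∧ r i + Q + 1 ≤ q
  · -- contained deep inside a level-k' cube
    right
    obtain ⟨γ', w', hlen, hval⟩ := exists_word n p hp0 k' m'
    have houter := mem_cubeOf' n p hp0 A hA γ' w' k' hlen m' (fun i => (hval i).symm)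
    have hset : cubeOf n p γ' w' A =
        {y : EuclideanSpace ℝ (Fin n) | ∀ j,
          (((p * m' j + 1) * q : ℤ) : ℝ) * t ≤ y j ∧ y j ≤ (((p * m' j + p - 1) * q : ℤ) : ℝ) * t} := by
      ext y
      rw [houter y]
      refine forall_congr' fun j => ?_
      rw [hconv (p * m' j + 1), hconv (p * m' j + p - 1)]
    -- key integer inequalities
    have iaL : ∀ j, (p * m' j + 1) * q + 1 ≤ p * m j + 1 := by
      intro j
      have h1 := (hgood j).1
      have h1p : Q * p ≤ r j * p := mul_le_mul_of_nonneg_right h1 hPpos.le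
      nlinarith [hm j, hq]
    have iaR : ∀ j, (p * m j + p - 1) + 1 ≤ (p * m' j + p - 1) * q := by
      intro j
      have h2 := (hgood j).2
      have h2p : (r j + Q + 1) * p ≤ q * p := mul_le_mul_of_nonneg_right h2 hPpos.le
      nlinarith [hm j, hq]
    refine ⟨γ', w', hlen, ?_, ?_⟩
    · intro x hx
      rw [hset]
      simp only [Set.mem_setOf_eq]
      intro j
      obtain ⟨h1, h2⟩ := (hxmem x).mp hx j
      have c1 : ((p * m' j + 1) * q : ℤ) ≤ p * m j + 1 := by linarith [iaL j]
      have c2 : (p * m j + p - 1 : ℤ) ≤ (p * m' j + p - 1) * q := by linarith [iaR j]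
      constructor
      · calc (((p * m' j + 1) * q : ℤ) : ℝ) * t ≤ ((p * m j + 1 : ℤ) : ℝ) * t := by
              have : (((p * m' j + 1) * q : ℤ) : ℝ) ≤ ((p * m j + 1 : ℤ) : ℝ) := by exact_mod_cast c1
              nlinarith
          _ ≤ x j := h1
      · calc x j ≤ ((p * m j + p - 1 : ℤ) : ℝ) * t := h2
          _ ≤ (((p * m' j + p - 1) * q : ℤ) : ℝ) * t := by
              have : ((p * m j + p - 1 : ℤ) : ℝ) ≤ (((p * m' j + p - 1) * q : ℤ) : ℝ) := by exact_mod_cast c2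
              nlinarith
    · intro x hx y hy
      rw [hset] at hy
      obtain ⟨j, hj⟩ := frontier_mem n
        (fun j => (((p * m' j + 1) * q : ℤ) : ℝ) * t)
        (fun j => (((p * m' j + p - 1) * q : ℤ) : ℝ) * t) hy
      obtain ⟨h1, h2⟩ := (hxmem x).mp hx j
      rcases hj with hj | hj
      · rw [dist_comm]
        exact key_dist y x j t ht (iaL j) hj h1
      · exact key_dist x y j t ht (iaR j) h2 hj
  · -- far from every level-k' cube
    left
    push_neg at hgood
    obtain ⟨i, hbad⟩ := hgood
    intro γ' w' hlen x hx y hy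
    have houter := mem_cubeOf' n p hp0 A hA γ' w'
      k' hlen (fun j => γ' j * (p:ℤ) ^ k' + Nval n p w' j) (fun j => rfl)
    set M : Fin n → ℤ := fun j => γ' j * (p:ℤ) ^ k' + Nval n p w' j with hMdef
    have hyb := (houter y).mp hy i
    rw [hconv (p * M i + 1), hconv (p * M i + p - 1)] at hyb
    obtain ⟨hy1, hy2⟩ := hyb
    obtain ⟨hx1, hx2⟩ := (hxmem x).mp hx i
    have hmi := hm i
    by_cases hQr : Q ≤ r i
    · -- r near the top: r ≥ q - Q
      have hrtop : q - Q ≤ r i := by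
        have h := hbad hQr
        linarith [Int.lt_iff_add_one_le.mp h]
      rcases le_or_gt (m' i + 1) (M i) with hM | hM
      · -- M ≥ m' + 1 : y is to the right
        have hab : (p * m i + p - 1) + 1 ≤ (p * M i + 1) * q := by
          have h1 : q * (m' i + 1) ≤ q * M i := mul_le_mul_of_nonneg_left hM hqpos.le
          have h2 : (q * M i) * p ≥ (q * (m' i + 1)) * p := mul_le_mul_of_nonneg_right h1 hPpos.le
          have h3 : r i * p ≤ (q - 1) * p := mul_le_mul_of_nonneg_right (by linarith [hrq i]) hPpos.le
          nlinarith [hmi, hq]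
        exact key_dist x y i t ht hab hx2 hy1
      · -- M ≤ m' : y is to the left
        have hM' : M i ≤ m' i := by linarith [Int.lt_iff_add_one_le.mp hM]
        have hab : (p * M i + p - 1) * q + 1 ≤ p * m i + 1 := by
          have h1 : q * M i ≤ q * m' i := mul_le_mul_of_nonneg_left hM' hqpos.le
          have h2 : (q * M i) * p ≤ (q * m' i) * p := mul_le_mul_of_nonneg_right h1 hPpos.le
          have h3 : (q - Q) * p ≤ r i * p := mul_le_mul_of_nonneg_right hrtop hPpos.le
          nlinarith [hmi, hq]
        rw [dist_comm]
        exact key_dist y x i t ht hab hy2 hx1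
    · -- r near the bottom: r ≤ Q - 1
      have hrbot : r i ≤ Q - 1 := by
        have h := lt_of_not_ge hQr
        linarith [Int.lt_iff_add_one_le.mp h]
      rcases le_or_gt (m' i) (M i) with hM | hM
      · -- M ≥ m' : y is to the right
        have hab : (p * m i + p - 1) + 1 ≤ (p * M i + 1) * q := by
          have h1 : q * m' i ≤ q * M i := mul_le_mul_of_nonneg_left hM hqpos.le
          have h2 : (q * m' i) * p ≤ (q * M i) * p := mul_le_mul_of_nonneg_right h1 hPpos.le
          have h3 : r i * p ≤ (Q - 1) * p := mul_le_mul_of_nonneg_right hrbot hPpos.le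
          nlinarith [hmi, hq]
        exact key_dist x y i t ht hab hx2 hy1
      · -- M ≤ m' - 1 : y is to the left
        have hM' : M i ≤ m' i - 1 := by linarith [Int.lt_iff_add_one_le.mp hM]
        have hab : (p * M i + p - 1) * q + 1 ≤ p * m i + 1 := by
          have h1 : q * M i ≤ q * (m' i - 1) := mul_le_mul_of_nonneg_left hM' hqpos.le
          have h2 : (q * M i) * p ≤ (q * (m' i - 1)) * p := mul_le_mul_of_nonneg_right h1 hPpos.le
          have h3 : 0 ≤ r i * p := mul_nonneg (hr0 i) hPpos.le
          nlinarith [hmi, hq]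
        rw [dist_comm]
        exact key_dist y x i t ht hab hy2 hx1
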